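/- Let k be a field and A_1, A_2, A_3, B_1, B_2, B_3 commutative k-algebras. Let P be a module over A_1 ⊗_k A_2, Q a module over A_2 ⊗_k A_3, P' a module over B_1 ⊗_k B_2, and Q' a module over B_2 ⊗_k B_3. Then there is a natural isomorphism (P ⊗_k P') ⊗_{A_2 ⊗_k B_2} (Q ⊗_k Q') ≅ (P ⊗_{A_2} Q) ⊗_k (P' ⊗_{B_2} Q') of modules over A_1 ⊗_k B_1 ⊗_k A_3 ⊗_k B_3. -/

import Mathlib

set_option synthInstance.maxHeartbeats 1000000
set_option maxHeartbeats 1000000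

open TensorProduct

private theorem addHomExt {R M N L : Type*} [CommSemiring R] [AddCommMonoid M]
    [AddCommMonoid N] [AddCommMonoid L] [Module R M] [Module R N]
    {f g : TensorProduct R M N →+ L}
    (h : ∀ m n, f (m ⊗ₜ[R] n) = g (m ⊗ₜ[R] n)) : f = g :=
  AddMonoidHom.ext fun z => TensorProduct.induction_on z (by simp) h
    (fun x y hx hy => by simp [map_add, hx, hy])

/-- Let `k` be a field and `A₁, A₂, A₃, B₁, B₂, B₃` commutative `k`-algebras.
Let `P` be a module over `A₁ ⊗_k A₂`, `Q` a module over `A₂ ⊗_k A₃`, `P'` a module over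
`B₁ ⊗_k B₂`, and `Q'` a module over `B₂ ⊗_k B₃`.  Then there is a natural isomorphism
`(P ⊗_k P') ⊗_{A₂ ⊗_k B₂} (Q ⊗_k Q') ≅ (P ⊗_{A₂} Q) ⊗_k (P' ⊗_{B₂} Q')` of modules over
`A₁ ⊗_k B₁ ⊗_k A₃ ⊗_k B₃`.

All the intermediate module structures are canonically determined; here they are
universally quantified together with the equations characterizing them on pure tensors
and pure scalars. -/
theorem stmt_13 (k : Type) [Field k]
    (A₁ A₂ A₃ B₁ B₂ B₃ : Type)
    [CommRing A₁] [Algebra k A₁] [CommRing A₂] [Algebra k A₂] [CommRing A₃] [Algebra k A₃]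
    [CommRing B₁] [Algebra k B₁] [CommRing B₂] [Algebra k B₂] [CommRing B₃] [Algebra k B₃]
    (P Q P' Q' : Type)
    [AddCommGroup P] [AddCommGroup Q] [AddCommGroup P'] [AddCommGroup Q']
    [Module (TensorProduct k A₁ A₂) P] [Module (TensorProduct k A₂ A₃) Q]
    [Module (TensorProduct k B₁ B₂) P'] [Module (TensorProduct k B₂ B₃) Q'] :
    -- the actions of the individual tensor factors on `P, Q, P', Q'`
    letI : Module A₂ P := Module.compHom P
      (Algebra.TensorProduct.includeRight : A₂ →ₐ[k] TensorProduct k A₁ A₂).toRingHom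
    letI : Module A₂ Q := Module.compHom Q
      (Algebra.TensorProduct.includeLeft : A₂ →ₐ[k] TensorProduct k A₂ A₃).toRingHom
    letI : Module B₂ P' := Module.compHom P'
      (Algebra.TensorProduct.includeRight : B₂ →ₐ[k] TensorProduct k B₁ B₂).toRingHom
    letI : Module B₂ Q' := Module.compHom Q'
      (Algebra.TensorProduct.includeLeft : B₂ →ₐ[k] TensorProduct k B₂ B₃).toRingHom
    letI : Module A₁ P := Module.compHom P
      (Algebra.TensorProduct.includeLeft : A₁ →ₐ[k] TensorProduct k A₁ A₂).toRingHom
    letI : Module A₃ Q := Module.compHom Q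
      (Algebra.TensorProduct.includeRight : A₃ →ₐ[k] TensorProduct k A₂ A₃).toRingHom
    letI : Module B₁ P' := Module.compHom P'
      (Algebra.TensorProduct.includeLeft : B₁ →ₐ[k] TensorProduct k B₁ B₂).toRingHom
    letI : Module B₃ Q' := Module.compHom Q'
      (Algebra.TensorProduct.includeRight : B₃ →ₐ[k] TensorProduct k B₂ B₃).toRingHom
    letI : Module k P := Module.compHom P (algebraMap k (TensorProduct k A₁ A₂))
    letI : Module k Q := Module.compHom Q (algebraMap k (TensorProduct k A₂ A₃))
    letI : Module k P' := Module.compHom P' (algebraMap k (TensorProduct k B₁ B₂))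
    letI : Module k Q' := Module.compHom Q' (algebraMap k (TensorProduct k B₂ B₃))
    -- the `A₂ ⊗ B₂`-module structure on `P ⊗_k P'`
    ∀ (mPP' : Module (TensorProduct k A₂ B₂) (TensorProduct k P P')),
    letI := mPP'
    (∀ (a₂ : A₂) (b₂ : B₂) (p : P) (p' : P'),
        (a₂ ⊗ₜ[k] b₂) • (p ⊗ₜ[k] p') = (a₂ • p) ⊗ₜ[k] (b₂ • p')) →
    -- the `A₂ ⊗ B₂`-module structure on `Q ⊗_k Q'`
    ∀ (mQQ' : Module (TensorProduct k A₂ B₂) (TensorProduct k Q Q')),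
    letI := mQQ'
    (∀ (a₂ : A₂) (b₂ : B₂) (q : Q) (q' : Q'),
        (a₂ ⊗ₜ[k] b₂) • (q ⊗ₜ[k] q') = (a₂ • q) ⊗ₜ[k] (b₂ • q')) →
    -- the `k`-module structures on `P ⊗_{A₂} Q` and `P' ⊗_{B₂} Q'`
    ∀ (mkT : Module k (TensorProduct A₂ P Q)),
    letI := mkT
    (∀ (c : k) (p : P) (q : Q), c • (p ⊗ₜ[A₂] q) = (c • p) ⊗ₜ[A₂] q) →
    ∀ (mkT' : Module k (TensorProduct B₂ P' Q')),
    letI := mkT'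
    (∀ (c : k) (p' : P') (q' : Q'), c • (p' ⊗ₜ[B₂] q') = (c • p') ⊗ₜ[B₂] q') →
    -- the `A₁ ⊗ B₁ ⊗ A₃ ⊗ B₃`-module structure on the left-hand side
    ∀ (mL : Module (TensorProduct k (TensorProduct k A₁ B₁) (TensorProduct k A₃ B₃))
        (TensorProduct (TensorProduct k A₂ B₂) (TensorProduct k P P') (TensorProduct k Q Q'))),
    letI := mL
    (∀ (a₁ : A₁) (b₁ : B₁) (a₃ : A₃) (b₃ : B₃) (p : P) (p' : P') (q : Q) (q' : Q'),
        ((a₁ ⊗ₜ[k] b₁) ⊗ₜ[k] (a₃ ⊗ₜ[k] b₃))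
            • ((p ⊗ₜ[k] p') ⊗ₜ[TensorProduct k A₂ B₂] (q ⊗ₜ[k] q'))
          = ((a₁ • p) ⊗ₜ[k] (b₁ • p'))
              ⊗ₜ[TensorProduct k A₂ B₂] ((a₃ • q) ⊗ₜ[k] (b₃ • q'))) →
    -- the `A₁ ⊗ B₁ ⊗ A₃ ⊗ B₃`-module structure on the right-hand side
    ∀ (mR : Module (TensorProduct k (TensorProduct k A₁ B₁) (TensorProduct k A₃ B₃))
        (TensorProduct k (TensorProduct A₂ P Q) (TensorProduct B₂ P' Q'))),
    letI := mR
    (∀ (a₁ : A₁) (b₁ : B₁) (a₃ : A₃) (b₃ : B₃) (p : P) (q : Q) (p' : P') (q' : Q'),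
        ((a₁ ⊗ₜ[k] b₁) ⊗ₜ[k] (a₃ ⊗ₜ[k] b₃)) • ((p ⊗ₜ[A₂] q) ⊗ₜ[k] (p' ⊗ₜ[B₂] q'))
          = ((a₁ • p) ⊗ₜ[A₂] (a₃ • q)) ⊗ₜ[k] ((b₁ • p') ⊗ₜ[B₂] (b₃ • q'))) →
    -- the natural isomorphism `(P ⊗ P') ⋆ (Q ⊗ Q') ≅ (P ⋆ Q) ⊗ (P' ⋆ Q')`
    Nonempty
      ((TensorProduct (TensorProduct k A₂ B₂) (TensorProduct k P P') (TensorProduct k Q Q'))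
        ≃ₗ[TensorProduct k (TensorProduct k A₁ B₁) (TensorProduct k A₃ B₃)]
        (TensorProduct k (TensorProduct A₂ P Q) (TensorProduct B₂ P' Q'))) := by
  intro mPP' hPP' mQQ' hQQ' mkT hkT mkT' hkT' mL hL mR hR
  letI iA2P : Module A₂ P := Module.compHom P
    (Algebra.TensorProduct.includeRight : A₂ →ₐ[k] TensorProduct k A₁ A₂).toRingHom
  letI iA2Q : Module A₂ Q := Module.compHom Q
    (Algebra.TensorProduct.includeLeft : A₂ →ₐ[k] TensorProduct k A₂ A₃).toRingHom
  letI iB2P' : Module B₂ P' := Module.compHom P'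
    (Algebra.TensorProduct.includeRight : B₂ →ₐ[k] TensorProduct k B₁ B₂).toRingHom
  letI iB2Q' : Module B₂ Q' := Module.compHom Q'
    (Algebra.TensorProduct.includeLeft : B₂ →ₐ[k] TensorProduct k B₂ B₃).toRingHom
  letI iA1P : Module A₁ P := Module.compHom P
    (Algebra.TensorProduct.includeLeft : A₁ →ₐ[k] TensorProduct k A₁ A₂).toRingHom
  letI iA3Q : Module A₃ Q := Module.compHom Q
    (Algebra.TensorProduct.includeRight : A₃ →ₐ[k] TensorProduct k A₂ A₃).toRingHom
  letI iB1P' : Module B₁ P' := Module.compHom P'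
    (Algebra.TensorProduct.includeLeft : B₁ →ₐ[k] TensorProduct k B₁ B₂).toRingHom
  letI iB3Q' : Module B₃ Q' := Module.compHom Q'
    (Algebra.TensorProduct.includeRight : B₃ →ₐ[k] TensorProduct k B₂ B₃).toRingHom
  letI ikP : Module k P := Module.compHom P (algebraMap k (TensorProduct k A₁ A₂))
  letI ikQ : Module k Q := Module.compHom Q (algebraMap k (TensorProduct k A₂ A₃))
  letI ikP' : Module k P' := Module.compHom P' (algebraMap k (TensorProduct k B₁ B₂))
  letI ikQ' : Module k Q' := Module.compHom Q' (algebraMap k (TensorProduct k B₂ B₃))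
  letI := mPP'
  letI := mQQ'
  letI := mkT
  letI := mkT'
  letI := mL
  letI := mR
  -- scalar compatibility lemmas
  have kP : ∀ (c : k) (p : P), c • p = (algebraMap k A₂ c) • p := by
    intro c p
    show (algebraMap k (TensorProduct k A₁ A₂) c) • p =
      ((Algebra.TensorProduct.includeRight : A₂ →ₐ[k] TensorProduct k A₁ A₂).toRingHom
        (algebraMap k A₂ c)) • p
    congr 1
    all_goals exact ((Algebra.TensorProduct.includeRight :
      A₂ →ₐ[k] TensorProduct k A₁ A₂).commutes c).symm
  have kQ : ∀ (c : k) (q : Q), c • q = (algebraMap k A₂ c) • q := by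
    intro c q
    show (algebraMap k (TensorProduct k A₂ A₃) c) • q =
      ((Algebra.TensorProduct.includeLeft : A₂ →ₐ[k] TensorProduct k A₂ A₃).toRingHom
        (algebraMap k A₂ c)) • q
    congr 1
    all_goals exact ((Algebra.TensorProduct.includeLeft :
      A₂ →ₐ[k] TensorProduct k A₂ A₃).commutes c).symm
  have kP' : ∀ (c : k) (p' : P'), c • p' = (algebraMap k B₂ c) • p' := by
    intro c p'
    show (algebraMap k (TensorProduct k B₁ B₂) c) • p' =
      ((Algebra.TensorProduct.includeRight : B₂ →ₐ[k] TensorProduct k B₁ B₂).toRingHom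
        (algebraMap k B₂ c)) • p'
    congr 1
    all_goals exact ((Algebra.TensorProduct.includeRight :
      B₂ →ₐ[k] TensorProduct k B₁ B₂).commutes c).symm
  have kQ' : ∀ (c : k) (q' : Q'), c • q' = (algebraMap k B₂ c) • q' := by
    intro c q'
    show (algebraMap k (TensorProduct k B₂ B₃) c) • q' =
      ((Algebra.TensorProduct.includeLeft : B₂ →ₐ[k] TensorProduct k B₂ B₃).toRingHom
        (algebraMap k B₂ c)) • q'
    congr 1
    all_goals exact ((Algebra.TensorProduct.includeLeft :
      B₂ →ₐ[k] TensorProduct k B₂ B₃).commutes c).symm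
  -- the forward map
  let g : P → P' → (TensorProduct k Q Q' →+
      TensorProduct k (TensorProduct A₂ P Q) (TensorProduct B₂ P' Q')) := fun p p' =>
    TensorProduct.liftAddHom
      (AddMonoidHom.mk'
        (fun q => AddMonoidHom.mk' (fun q' => (p ⊗ₜ[A₂] q) ⊗ₜ[k] (p' ⊗ₜ[B₂] q'))
          (fun q'₁ q'₂ => by simp only [tmul_add]))
        (fun q₁ q₂ => AddMonoidHom.ext fun q' => by
          show ((p ⊗ₜ[A₂] (q₁ + q₂)) ⊗ₜ[k] (p' ⊗ₜ[B₂] q')) = _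
          rw [tmul_add, add_tmul]
          rfl))
      (fun c q q' => by
        show (p ⊗ₜ[A₂] (c • q)) ⊗ₜ[k] (p' ⊗ₜ[B₂] q')
          = (p ⊗ₜ[A₂] q) ⊗ₜ[k] (p' ⊗ₜ[B₂] (c • q'))
        calc (p ⊗ₜ[A₂] (c • q)) ⊗ₜ[k] (p' ⊗ₜ[B₂] q')
            = ((c • p) ⊗ₜ[A₂] q) ⊗ₜ[k] (p' ⊗ₜ[B₂] q') := by
              rw [kQ, kP, smul_tmul]
          _ = (c • (p ⊗ₜ[A₂] q)) ⊗ₜ[k] (p' ⊗ₜ[B₂] q') := by rw [hkT]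
          _ = (p ⊗ₜ[A₂] q) ⊗ₜ[k] (c • (p' ⊗ₜ[B₂] q')) := smul_tmul _ _ _
          _ = (p ⊗ₜ[A₂] q) ⊗ₜ[k] ((c • p') ⊗ₜ[B₂] q') := by rw [hkT']
          _ = (p ⊗ₜ[A₂] q) ⊗ₜ[k] (p' ⊗ₜ[B₂] (c • q')) := by
              rw [kP', smul_tmul, ← kQ'])
  have g_apply : ∀ (p : P) (p' : P') (q : Q) (q' : Q'),
      g p p' (q ⊗ₜ[k] q') = (p ⊗ₜ[A₂] q) ⊗ₜ[k] (p' ⊗ₜ[B₂] q') := fun _ _ _ _ => rfl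
  let G : TensorProduct k P P' →+ (TensorProduct k Q Q' →+
      TensorProduct k (TensorProduct A₂ P Q) (TensorProduct B₂ P' Q')) :=
    TensorProduct.liftAddHom
      (AddMonoidHom.mk'
        (fun p => AddMonoidHom.mk' (fun p' => g p p')
          (fun p'₁ p'₂ => addHomExt fun q q' => by
            show ((p ⊗ₜ[A₂] q) ⊗ₜ[k] ((p'₁ + p'₂) ⊗ₜ[B₂] q')) = _
            rw [add_tmul, tmul_add]
            rfl))
        (fun p₁ p₂ => AddMonoidHom.ext fun p' => addHomExt fun q q' => by
          show (((p₁ + p₂) ⊗ₜ[A₂] q) ⊗ₜ[k] (p' ⊗ₜ[B₂] q')) = _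
          rw [add_tmul, add_tmul]
          rfl))
      (fun c p p' => addHomExt fun q q' => by
        show ((c • p) ⊗ₜ[A₂] q) ⊗ₜ[k] (p' ⊗ₜ[B₂] q')
          = (p ⊗ₜ[A₂] q) ⊗ₜ[k] ((c • p') ⊗ₜ[B₂] q')
        rw [← hkT, smul_tmul, hkT'])
  have G_apply : ∀ (p : P) (p' : P') (q : Q) (q' : Q'),
      G (p ⊗ₜ[k] p') (q ⊗ₜ[k] q') = (p ⊗ₜ[A₂] q) ⊗ₜ[k] (p' ⊗ₜ[B₂] q') :=
    fun _ _ _ _ => rfl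
  let fwd : TensorProduct (TensorProduct k A₂ B₂) (TensorProduct k P P')
      (TensorProduct k Q Q') →+
      TensorProduct k (TensorProduct A₂ P Q) (TensorProduct B₂ P' Q') :=
    TensorProduct.liftAddHom G
      (by
        intro r m n
        induction r with
        | zero => simp
        | add r₁ r₂ h₁ h₂ => simp [smul_add, add_smul, tmul_add, add_tmul, h₁, h₂]
        | tmul a₂ b₂ =>
            induction m with
            | zero => simp
            | add m₁ m₂ h₁ h₂ => simp [smul_add, add_smul, tmul_add, add_tmul, h₁, h₂]
            | tmul p p' =>
                induction n with
                | zero => simp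
                | add n₁ n₂ h₁ h₂ => simp [smul_add, add_smul, tmul_add, add_tmul, h₁, h₂]
                | tmul q q' =>
                    rw [hPP', hQQ', G_apply, G_apply]
                    calc ((a₂ • p) ⊗ₜ[A₂] q) ⊗ₜ[k] ((b₂ • p') ⊗ₜ[B₂] q')
                        = (p ⊗ₜ[A₂] (a₂ • q)) ⊗ₜ[k] ((b₂ • p') ⊗ₜ[B₂] q') := by
                          rw [smul_tmul]
                      _ = (p ⊗ₜ[A₂] (a₂ • q)) ⊗ₜ[k] (p' ⊗ₜ[B₂] (b₂ • q')) := by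
                          rw [smul_tmul])
  have fwd_apply : ∀ (p : P) (p' : P') (q : Q) (q' : Q'),
      fwd ((p ⊗ₜ[k] p') ⊗ₜ[TensorProduct k A₂ B₂] (q ⊗ₜ[k] q'))
        = (p ⊗ₜ[A₂] q) ⊗ₜ[k] (p' ⊗ₜ[B₂] q') := fun _ _ _ _ => rfl
  -- the backward map
  let w₀ : P → Q → (TensorProduct B₂ P' Q' →+
      TensorProduct (TensorProduct k A₂ B₂) (TensorProduct k P P')
        (TensorProduct k Q Q')) := fun p q =>
    TensorProduct.liftAddHom
      (AddMonoidHom.mk'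
        (fun p' => AddMonoidHom.mk'
          (fun q' => (p ⊗ₜ[k] p') ⊗ₜ[TensorProduct k A₂ B₂] (q ⊗ₜ[k] q'))
          (fun q'₁ q'₂ => by simp only [tmul_add]))
        (fun p'₁ p'₂ => AddMonoidHom.ext fun q' => by
          show ((p ⊗ₜ[k] (p'₁ + p'₂)) ⊗ₜ[TensorProduct k A₂ B₂] (q ⊗ₜ[k] q')) = _
          rw [tmul_add, add_tmul]
          rfl))
      (fun b₂ p' q' => by
        show (p ⊗ₜ[k] (b₂ • p')) ⊗ₜ[TensorProduct k A₂ B₂] (q ⊗ₜ[k] q')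
          = (p ⊗ₜ[k] p') ⊗ₜ[TensorProduct k A₂ B₂] (q ⊗ₜ[k] (b₂ • q'))
        calc (p ⊗ₜ[k] (b₂ • p')) ⊗ₜ[TensorProduct k A₂ B₂] (q ⊗ₜ[k] q')
            = (((1 : A₂) ⊗ₜ[k] b₂) • (p ⊗ₜ[k] p'))
                ⊗ₜ[TensorProduct k A₂ B₂] (q ⊗ₜ[k] q') := by
              rw [hPP', one_smul]
          _ = (p ⊗ₜ[k] p') ⊗ₜ[TensorProduct k A₂ B₂]
                (((1 : A₂) ⊗ₜ[k] b₂) • (q ⊗ₜ[k] q')) := smul_tmul _ _ _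
          _ = (p ⊗ₜ[k] p') ⊗ₜ[TensorProduct k A₂ B₂] (q ⊗ₜ[k] (b₂ • q')) := by
              rw [hQQ', one_smul])
  let w : TensorProduct A₂ P Q →+ (TensorProduct B₂ P' Q' →+
      TensorProduct (TensorProduct k A₂ B₂) (TensorProduct k P P')
        (TensorProduct k Q Q')) :=
    TensorProduct.liftAddHom
      (AddMonoidHom.mk'
        (fun p => AddMonoidHom.mk' (fun q => w₀ p q)
          (fun q₁ q₂ => addHomExt fun p' q' => by
            show ((p ⊗ₜ[k] p') ⊗ₜ[TensorProduct k A₂ B₂] ((q₁ + q₂) ⊗ₜ[k] q')) = _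
            rw [add_tmul, tmul_add]
            rfl))
        (fun p₁ p₂ => AddMonoidHom.ext fun q => addHomExt fun p' q' => by
          show (((p₁ + p₂) ⊗ₜ[k] p') ⊗ₜ[TensorProduct k A₂ B₂] (q ⊗ₜ[k] q')) = _
          rw [add_tmul, add_tmul]
          rfl))
      (fun a₂ p q => addHomExt fun p' q' => by
        show ((a₂ • p) ⊗ₜ[k] p') ⊗ₜ[TensorProduct k A₂ B₂] (q ⊗ₜ[k] q')
          = (p ⊗ₜ[k] p') ⊗ₜ[TensorProduct k A₂ B₂] ((a₂ • q) ⊗ₜ[k] q')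
        calc ((a₂ • p) ⊗ₜ[k] p') ⊗ₜ[TensorProduct k A₂ B₂] (q ⊗ₜ[k] q')
            = ((a₂ ⊗ₜ[k] (1 : B₂)) • (p ⊗ₜ[k] p'))
                ⊗ₜ[TensorProduct k A₂ B₂] (q ⊗ₜ[k] q') := by
              rw [hPP', one_smul]
          _ = (p ⊗ₜ[k] p') ⊗ₜ[TensorProduct k A₂ B₂]
                ((a₂ ⊗ₜ[k] (1 : B₂)) • (q ⊗ₜ[k] q')) := smul_tmul _ _ _
          _ = (p ⊗ₜ[k] p') ⊗ₜ[TensorProduct k A₂ B₂] ((a₂ • q) ⊗ₜ[k] q') := by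
              rw [hQQ', one_smul])
  have w_apply : ∀ (p : P) (q : Q) (p' : P') (q' : Q'),
      w (p ⊗ₜ[A₂] q) (p' ⊗ₜ[B₂] q')
        = (p ⊗ₜ[k] p') ⊗ₜ[TensorProduct k A₂ B₂] (q ⊗ₜ[k] q') := fun _ _ _ _ => rfl
  let bwd : TensorProduct k (TensorProduct A₂ P Q) (TensorProduct B₂ P' Q') →+
      TensorProduct (TensorProduct k A₂ B₂) (TensorProduct k P P')
        (TensorProduct k Q Q') :=
    TensorProduct.liftAddHom w
      (by
        intro c x y
        induction x with
        | zero => simp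
        | add x₁ x₂ h₁ h₂ => simp [smul_add, add_smul, tmul_add, add_tmul, h₁, h₂]
        | tmul p q =>
            induction y with
            | zero => simp
            | add y₁ y₂ h₁ h₂ => simp [smul_add, add_smul, tmul_add, add_tmul, h₁, h₂]
            | tmul p' q' =>
                rw [hkT, hkT', w_apply, w_apply, smul_tmul])
  have bwd_apply : ∀ (p : P) (q : Q) (p' : P') (q' : Q'),
      bwd ((p ⊗ₜ[A₂] q) ⊗ₜ[k] (p' ⊗ₜ[B₂] q'))
        = (p ⊗ₜ[k] p') ⊗ₜ[TensorProduct k A₂ B₂] (q ⊗ₜ[k] q') := fun _ _ _ _ => rfl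
  -- inverse properties
  have hleft : ∀ z, bwd (fwd z) = z := by
    intro z
    induction z with
    | zero => simp
    | add z₁ z₂ h₁ h₂ => simp [smul_add, add_smul, tmul_add, add_tmul, h₁, h₂]
    | tmul m n =>
        induction m with
        | zero => simp
        | add m₁ m₂ h₁ h₂ => simp [smul_add, add_smul, tmul_add, add_tmul, h₁, h₂]
        | tmul p p' =>
            induction n with
            | zero => simp
            | add n₁ n₂ h₁ h₂ => simp [smul_add, add_smul, tmul_add, add_tmul, h₁, h₂]
            | tmul q q' => rw [fwd_apply, bwd_apply]
  have hright : ∀ z, fwd (bwd z) = z := by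
    intro z
    induction z with
    | zero => simp
    | add z₁ z₂ h₁ h₂ => simp [smul_add, add_smul, tmul_add, add_tmul, h₁, h₂]
    | tmul x y =>
        induction x with
        | zero => simp
        | add x₁ x₂ h₁ h₂ => simp [smul_add, add_smul, tmul_add, add_tmul, h₁, h₂]
        | tmul p q =>
            induction y with
            | zero => simp
            | add y₁ y₂ h₁ h₂ => simp [smul_add, add_smul, tmul_add, add_tmul, h₁, h₂]
            | tmul p' q' => rw [bwd_apply, fwd_apply]
  -- linearity of the forward map
  have hsmul : ∀ (r : TensorProduct k (TensorProduct k A₁ B₁) (TensorProduct k A₃ B₃))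
      (z : TensorProduct (TensorProduct k A₂ B₂) (TensorProduct k P P')
        (TensorProduct k Q Q')), fwd (r • z) = r • fwd z := by
    intro r z
    induction r with
    | zero => exact (congrArg fwd (zero_smul (TensorProduct k (TensorProduct k A₁ B₁) (TensorProduct k A₃ B₃)) z)).trans ((map_zero fwd).trans (zero_smul (TensorProduct k (TensorProduct k A₁ B₁) (TensorProduct k A₃ B₃)) (fwd z)).symm)
    | add r₁ r₂ h₁ h₂ => simp [smul_add, add_smul, tmul_add, add_tmul, h₁, h₂]
    | tmul u v =>
        induction u with
        | zero => simp; exact (congrArg fwd (zero_smul (TensorProduct k (TensorProduct k A₁ B₁) (TensorProduct k A₃ B₃)) z)).trans ((map_zero fwd).trans (zero_smul (TensorProduct k (TensorProduct k A₁ B₁) (TensorProduct k A₃ B₃)) (fwd z)).symm)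
        | add u₁ u₂ h₁ h₂ => simp [smul_add, add_smul, tmul_add, add_tmul, h₁, h₂]
        | tmul a₁ b₁ =>
            induction v with
            | zero => simp; exact (congrArg fwd (zero_smul (TensorProduct k (TensorProduct k A₁ B₁) (TensorProduct k A₃ B₃)) z)).trans ((map_zero fwd).trans (zero_smul (TensorProduct k (TensorProduct k A₁ B₁) (TensorProduct k A₃ B₃)) (fwd z)).symm)
            | add v₁ v₂ h₁ h₂ => simp [smul_add, add_smul, tmul_add, add_tmul, h₁, h₂]
            | tmul a₃ b₃ =>
                induction z with
                | zero => simp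
                | add z₁ z₂ h₁ h₂ => simp [smul_add, add_smul, tmul_add, add_tmul, h₁, h₂]
                | tmul m n =>
                    induction m with
                    | zero => simp
                    | add m₁ m₂ h₁ h₂ => simp [smul_add, add_smul, tmul_add, add_tmul, h₁, h₂]
                    | tmul p p' =>
                        induction n with
                        | zero => simp
                        | add n₁ n₂ h₁ h₂ => simp [smul_add, add_smul, tmul_add, add_tmul, h₁, h₂]
                        | tmul q q' =>
                            rw [hL, fwd_apply, fwd_apply, hR]
  exact ⟨{ toFun := fwd, map_add' := map_add fwd, map_smul' := hsmul,
           invFun := bwd, left_inv := hleft, right_inv := hright }⟩
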